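/- arXiv:1008.2005 — 5 statements merged into one kernel-verified Lean document; each statement's English description precedes it below -/
import Mathlib

section
/- Let f : 2^X → ℝ be a nonnegative monotone submodular function on a finite set X with cost function c : X → ℝ_{>0}, let η ∈ ℝ, and let S* ⊆ X satisfy f(S*) ≥ η. Define g(S) = min(f(S), η) and, for any S ⊆ X with g(S) < η, set η_S = η − g(S). Then there exists an element x ∈ X \ S such that (g(S ∪ {x}) − g(S))/c(x) ≥ η_S / c(S*), where c(S*) = Σ_{y ∈ S*} c(y). -/
/-- Greedy progress lemma: there is an element whose marginal gain (w.r.t. `g = min (f ·) η`)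
per unit cost is at least the remaining shortfall divided by the cost of an optimal set. -/
theorem greedy_progress {X : Type*} [DecidableEq X] [Fintype X]
    (f : Finset X → ℝ) (c : X → ℝ) (η : ℝ) (Sstar S : Finset X)
    (hnn : ∀ A : Finset X, 0 ≤ f A)
    (hmono : ∀ A B : Finset X, A ⊆ B → f A ≤ f B)
    (hsub : ∀ (A B : Finset X) (w : X), A ⊆ B →
      f (insert w B) - f B ≤ f (insert w A) - f A)
    (hc : ∀ v : X, 0 < c v)
    (hstar : η ≤ f Sstar)
    (hS : min (f S) η < η) :
    ∃ x ∉ S, (η - min (f S) η) / (∑ y ∈ Sstar, c y) ≤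
      (min (f (insert x S)) η - min (f S) η) / c x := by
  set g : Finset X → ℝ := fun A => min (f A) η with hg
  have gmono : ∀ A B : Finset X, A ⊆ B → g A ≤ g B := fun A B h =>
    min_le_min (hmono A B h) le_rfl
  have gsub : ∀ (A B : Finset X) (w : X), A ⊆ B →
      g (insert w B) - g B ≤ g (insert w A) - g A := by
    intro A B w hAB
    simp only [hg]
    rcases le_or_gt η (f B) with hb | hb
    · have h1 : min (f B) η = η := min_eq_right hb
      have h2 : min (f (insert w B)) η = η :=
        min_eq_right (le_trans hb (hmono _ _ (Finset.subset_insert _ _)))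
      rw [h1, h2]
      have := min_le_min (hmono A (insert w A) (Finset.subset_insert _ _)) (le_refl η)
      linarith
    · have hminB : min (f B) η = f B := min_eq_left hb.le
      have ha : f A ≤ f B := hmono _ _ hAB
      have hminA : min (f A) η = f A := min_eq_left (ha.trans hb.le)
      rw [hminB, hminA]
      rcases le_or_gt (f (insert w A)) η with ha' | ha'
      · rw [min_eq_left ha']
        linarith [hsub A B w hAB, min_le_left (f (insert w B)) η]
      · rw [min_eq_right ha'.le]
        linarith [min_le_right (f (insert w B)) η]
  have tele : ∀ T : Finset X, g (S ∪ T) - g S ≤ ∑ x ∈ T, (g (insert x S) - g S) := by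
    intro T
    induction T using Finset.induction_on with
    | empty => simp
    | @insert a T ha ih =>
      rw [Finset.sum_insert ha, Finset.union_insert]
      have h1 := gsub S (S ∪ T) a Finset.subset_union_left
      linarith
  have hT : (Sstar \ S).Nonempty := by
    by_contra h
    rw [Finset.not_nonempty_iff_eq_empty, Finset.sdiff_eq_empty_iff_subset] at h
    have h1 := gmono Sstar S h
    have h2 : g Sstar = η := min_eq_right hstar
    simp only [hg] at h1 h2
    linarith
  obtain ⟨x, hxT, hxmax⟩ := Finset.exists_max_image (Sstar \ S)
    (fun y => (min (f (insert y S)) η - min (f S) η) / c y) hT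
  obtain ⟨hxStar, hxS⟩ := Finset.mem_sdiff.mp hxT
  refine ⟨x, hxS, ?_⟩
  set r : ℝ := (min (f (insert x S)) η - min (f S) η) / c x with hr
  have hr0 : 0 ≤ r := by
    apply div_nonneg _ (hc x).le
    have := gmono S (insert x S) (Finset.subset_insert _ _)
    simp only [hg] at this
    linarith
  have hbound : ∀ y ∈ Sstar \ S, g (insert y S) - g S ≤ r * c y := by
    intro y hy
    have := hxmax y hy
    simp only [hg]
    rw [div_le_iff₀ (hc y)] at this
    linarith
  have hsum : ∑ y ∈ Sstar \ S, (g (insert y S) - g S) ≤ r * ∑ y ∈ Sstar, c y := by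
    calc ∑ y ∈ Sstar \ S, (g (insert y S) - g S) ≤ ∑ y ∈ Sstar \ S, r * c y :=
          Finset.sum_le_sum hbound
      _ = r * ∑ y ∈ Sstar \ S, c y := by rw [Finset.mul_sum]
      _ ≤ r * ∑ y ∈ Sstar, c y := by
          apply mul_le_mul_of_nonneg_left _ hr0
          exact Finset.sum_le_sum_of_subset_of_nonneg (Finset.sdiff_subset)
            (fun y _ _ => (hc y).le)
  have hgunion : g (S ∪ Sstar) = η := by
    apply min_eq_right
    exact le_trans hstar (hmono _ _ Finset.subset_union_right)
  have htel := tele (Sstar \ S)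
  rw [Finset.union_sdiff_self_eq_union, hgunion] at htel
  have hC : 0 < ∑ y ∈ Sstar, c y :=
    Finset.sum_pos (fun y _ => hc y) ⟨x, hxStar⟩
  rw [div_le_iff₀ hC]
  simp only [hg] at htel
  linarith
end

section
/- Let f : 2^X → ℝ be a nonnegative monotone submodular function with f(∅) = 0 on a finite set X, with positive cost function c, threshold η > 0, and shortfall ε with 0 < ε < η. Suppose there exists S* ⊆ X with f(S*) ≥ η, and let κ = c(S*). Run the greedy algorithm that, starting from S = ∅, repeatedly adds the element x maximizing (min(f(S ∪ {x}), η) − min(f(S), η))/c(x), until min(f(S), η) ≥ η − ε. Then the greedy algorithm terminates with a set S satisfying f(S) ≥ η − ε and c(S) ≤ κ · (1 + ln(η/ε)). -/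
lemma trunc_submod {a b a' b' η : ℝ} (hab : a ≤ b) (ha : a ≤ a') (hb : b ≤ b')
    (hab' : a' ≤ b') (hs : b' - b ≤ a' - a) :
    min b' η - min b η ≤ min a' η - min a η := by
  simp only [min_def]
  split_ifs <;> linarith

lemma telescope_submod {X : Type*} [DecidableEq X] (g : Finset X → ℝ)
    (hsub : ∀ (S T : Finset X) (w : X), S ⊆ T →
      g (insert w T) - g T ≤ g (insert w S) - g S)
    (S : Finset X) (T : Finset X) :
    g (S ∪ T) - g S ≤ ∑ w ∈ T, (g (insert w S) - g S) := by
  induction T using Finset.induction_on with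
  | empty => simp
  | insert a T haT ih =>
    rw [Finset.union_insert, Finset.sum_insert haT]
    have h := hsub S (S ∪ T) a Finset.subset_union_left
    linarith

lemma greedy_mintss_abstract {X : Type*} [DecidableEq X] [Fintype X]
    (g : Finset X → ℝ) (c : X → ℝ) (η ε : ℝ)
    (hg0 : g ∅ = 0)
    (hmono : ∀ S T : Finset X, S ⊆ T → g S ≤ g T)
    (hsub : ∀ (S T : Finset X) (w : X), S ⊆ T →
      g (insert w T) - g T ≤ g (insert w S) - g S)
    (hgle : ∀ S : Finset X, g S ≤ η)
    (hc : ∀ v : X, 0 < c v) (hε : 0 < ε) (hεη : ε < η)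
    (Sstar : Finset X) (hstar : ∀ S : Finset X, η ≤ g (S ∪ Sstar))
    (seq : ℕ → Finset X) (pick : ℕ → X) (hseq0 : seq 0 = ∅)
    (hstep : ∀ i : ℕ, g (seq i) < η - ε →
      pick i ∉ seq i ∧ seq (i + 1) = insert (pick i) (seq i) ∧
      (∀ w : X, w ∉ seq i →
        (g (insert w (seq i)) - g (seq i)) / c w ≤
        (g (insert (pick i) (seq i)) - g (seq i)) / c (pick i))) :
    ∃ l : ℕ, η - ε ≤ g (seq l) ∧
      ∑ v ∈ seq l, c v ≤ (∑ v ∈ Sstar, c v) * (1 + Real.log (η / ε)) := by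
  classical
  have hηpos : 0 < η := hε.trans hεη
  set κ := ∑ v ∈ Sstar, c v with hκdef
  have hSne : Sstar.Nonempty := by
    rcases Finset.eq_empty_or_nonempty Sstar with h | h
    · exfalso
      have := hstar ∅
      rw [h] at this
      simp [hg0] at this
      linarith
    · exact h
  have hκpos : 0 < κ := Finset.sum_pos (fun v _ => hc v) hSne
  -- key per-step inequality
  have key : ∀ i : ℕ, g (seq i) < η - ε →
      pick i ∉ seq i ∧ seq (i + 1) = insert (pick i) (seq i) ∧
      (η - g (seq i)) * c (pick i) ≤ κ * (g (seq (i + 1)) - g (seq i)) := by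
    intro i hi
    obtain ⟨h1, h2, h3⟩ := hstep i hi
    refine ⟨h1, h2, ?_⟩
    set S := seq i with hS
    set r := (g (insert (pick i) S) - g S) / c (pick i) with hr
    have hrnn : 0 ≤ r := by
      apply div_nonneg _ (hc _).le
      have := hmono S (insert (pick i) S) (Finset.subset_insert _ _)
      linarith
    have hsum : η - g S ≤ ∑ w ∈ Sstar, (g (insert w S) - g S) := by
      have hcov := hstar S
      have := telescope_submod g hsub S Sstar
      linarith
    have hterm : ∀ w ∈ Sstar, g (insert w S) - g S ≤ c w * r := by
      intro w hw
      by_cases hwS : w ∈ S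
      · rw [Finset.insert_eq_self.mpr hwS]
        simpa using mul_nonneg (hc w).le hrnn
      · have h4 := h3 w hwS
        rw [div_le_iff₀ (hc w)] at h4
        calc g (insert w S) - g S ≤ r * c w := h4
          _ = c w * r := mul_comm _ _
    have hsum2 : η - g S ≤ κ * r := by
      calc η - g S ≤ ∑ w ∈ Sstar, (g (insert w S) - g S) := hsum
        _ ≤ ∑ w ∈ Sstar, c w * r := Finset.sum_le_sum hterm
        _ = κ * r := by rw [← Finset.sum_mul]
    have hrc : r * c (pick i) = g (insert (pick i) S) - g S := by
      rw [hr, div_mul_cancel₀]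
      exact (hc (pick i)).ne'
    calc (η - g S) * c (pick i) ≤ κ * r * c (pick i) :=
          mul_le_mul_of_nonneg_right hsum2 (hc _).le
      _ = κ * (g (insert (pick i) S) - g S) := by rw [mul_assoc, hrc]
      _ = κ * (g (seq (i + 1)) - g S) := by rw [h2]
  -- cardinality grows while the condition holds
  have hcard : ∀ i : ℕ, (∀ j < i, g (seq j) < η - ε) → (seq i).card = i := by
    intro i
    induction i with
    | zero => intro _; simp [hseq0]
    | succ n ih =>
      intro h
      have hn := h n (Nat.lt_succ_self n)
      obtain ⟨h1, h2, _⟩ := hstep n hn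
      rw [h2, Finset.card_insert_of_notMem h1,
        ih (fun j hj => h j (hj.trans (Nat.lt_succ_self n)))]
  -- termination
  have hex : ∃ i, η - ε ≤ g (seq i) := by
    by_contra hco
    push_neg at hco
    have h1 := hcard (Fintype.card X + 1) (fun j _ => hco j)
    have h2 : (seq (Fintype.card X + 1)).card ≤ Fintype.card X := by
      simpa using Finset.card_le_univ (seq (Fintype.card X + 1))
    omega
  set l := Nat.find hex with hldef
  have hl : η - ε ≤ g (seq l) := Nat.find_spec hex
  have hlt : ∀ j < l, g (seq j) < η - ε := fun j hj => not_le.1 (Nat.find_min hex hj)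
  have hl0 : l ≠ 0 := by
    intro h
    rw [h, hseq0, hg0] at hl
    linarith
  -- exponential decay of deficit
  have hexp : ∀ i ≤ l, η - g (seq i) ≤ η * Real.exp (-(∑ v ∈ seq i, c v) / κ) := by
    intro i
    induction i with
    | zero => intro _; simp [hseq0, hg0]
    | succ n ih =>
      intro hsl
      have hn : n < l := Nat.lt_of_succ_le hsl
      have hltn := hlt n hn
      obtain ⟨hni, hse, hkey⟩ := key n hltn
      have ihn := ih hn.le
      have hd1 : 0 ≤ η - g (seq (n + 1)) := by linarith [hgle (seq (n + 1))]
      have hdn : 0 < η - g (seq n) := by linarith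
      have hstep2 : η - g (seq (n + 1)) ≤ (η - g (seq n)) * (1 - c (pick n) / κ) := by
        have h5 : (η - g (seq n)) * (c (pick n) / κ) ≤ g (seq (n + 1)) - g (seq n) := by
          rw [mul_div_assoc', div_le_iff₀ hκpos]
          linarith [hkey]
        rw [mul_one_sub]
        linarith
      have h1x : 1 - c (pick n) / κ ≤ Real.exp (-(c (pick n) / κ)) := by
        have := Real.add_one_le_exp (-(c (pick n) / κ))
        linarith
      calc η - g (seq (n + 1)) ≤ (η - g (seq n)) * (1 - c (pick n) / κ) := hstep2
        _ ≤ (η - g (seq n)) * Real.exp (-(c (pick n) / κ)) :=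
            mul_le_mul_of_nonneg_left h1x hdn.le
        _ ≤ η * Real.exp (-(∑ v ∈ seq n, c v) / κ) * Real.exp (-(c (pick n) / κ)) :=
            mul_le_mul_of_nonneg_right ihn (Real.exp_pos _).le
        _ = η * Real.exp (-(∑ v ∈ seq (n + 1), c v) / κ) := by
            rw [hse, Finset.sum_insert hni, mul_assoc, ← Real.exp_add]
            congr 1
            field_simp
            ring
  -- final assembly
  obtain ⟨m, hml⟩ := Nat.exists_eq_succ_of_ne_zero hl0
  have hm : g (seq m) < η - ε := hlt m (by omega)
  obtain ⟨hnm, hsm, hkm⟩ := key m hm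
  have hdm : ε < η - g (seq m) := by linarith
  have hcm : c (pick m) ≤ κ := by
    have h1 : g (seq (m + 1)) ≤ η := hgle _
    nlinarith [hkm, hκpos, hdm, hε]
  have hCm : ∑ v ∈ seq m, c v ≤ κ * Real.log (η / ε) := by
    have h1 := hexp m (by omega)
    have h2 : ε < η * Real.exp (-(∑ v ∈ seq m, c v) / κ) := by linarith
    have h3 : ε / η < Real.exp (-(∑ v ∈ seq m, c v) / κ) := by
      rw [div_lt_iff₀ hηpos]
      linarith [mul_comm η (Real.exp (-(∑ v ∈ seq m, c v) / κ))]
    have h4 : Real.log (ε / η) < -(∑ v ∈ seq m, c v) / κ :=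
      (Real.log_lt_iff_lt_exp (div_pos hε hηpos)).mpr h3
    have h5 : Real.log (ε / η) = -Real.log (η / ε) := by
      rw [← Real.log_inv]
      congr 1
      field_simp
    rw [h5, neg_div] at h4
    have h6 : (∑ v ∈ seq m, c v) / κ < Real.log (η / ε) := by linarith
    rw [div_lt_iff₀ hκpos] at h6
    nlinarith [h6]
  refine ⟨l, hl, ?_⟩
  rw [hml, hsm, Finset.sum_insert hnm]
  have : κ * (1 + Real.log (η / ε)) = κ + κ * Real.log (η / ε) := by ring
  rw [this]
  linarith

/-- Bicriteria approximation for weighted MINTSS / real-valued submodular set cover: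
the greedy algorithm terminates with a set `S` with `f S ≥ η - ε` and
`c S ≤ c(S*) · (1 + ln (η/ε))`. -/
theorem greedy_mintss_bicriteria {X : Type*} [DecidableEq X] [Fintype X]
    (f : Finset X → ℝ) (c : X → ℝ) (η ε : ℝ)
    (hf0 : f ∅ = 0) (hnn : ∀ S : Finset X, 0 ≤ f S)
    (hmono : ∀ S T : Finset X, S ⊆ T → f S ≤ f T)
    (hsub : ∀ (S T : Finset X) (w : X), S ⊆ T →
      f (insert w T) - f T ≤ f (insert w S) - f S)
    (hc : ∀ v : X, 0 < c v) (hε : 0 < ε) (hεη : ε < η)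
    (Sstar : Finset X) (hstar : η ≤ f Sstar)
    (seq : ℕ → Finset X) (pick : ℕ → X)
    (hseq0 : seq 0 = ∅)
    (hstep : ∀ i : ℕ, min (f (seq i)) η < η - ε →
      pick i ∉ seq i ∧
      seq (i + 1) = insert (pick i) (seq i) ∧
      (∀ w : X, w ∉ seq i →
        (min (f (insert w (seq i))) η - min (f (seq i)) η) / c w ≤
        (min (f (insert (pick i) (seq i))) η - min (f (seq i)) η) / c (pick i))) :
    ∃ l : ℕ, η - ε ≤ f (seq l) ∧
      ∑ v ∈ seq l, c v ≤ (∑ v ∈ Sstar, c v) * (1 + Real.log (η / ε)) := by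
  have hηpos : 0 < η := hε.trans hεη
  obtain ⟨l, h1, h2⟩ := greedy_mintss_abstract (fun S => min (f S) η) c η ε
    (by simp [hf0, hηpos.le])
    (fun S T h => min_le_min (hmono S T h) le_rfl)
    (fun S T w h => trunc_submod (hmono S T h)
      (hmono S (insert w S) (Finset.subset_insert _ _))
      (hmono T (insert w T) (Finset.subset_insert _ _))
      (hmono (insert w S) (insert w T) (Finset.insert_subset_insert w h))
      (hsub S T w h))
    (fun S => min_le_right _ _) hc hε hεη Sstar
    (fun S => le_min (hstar.trans (hmono Sstar (S ∪ Sstar) Finset.subset_union_right)) le_rfl)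
    seq pick hseq0 hstep
  exact ⟨l, h1.trans (min_le_left _ _), h2⟩
end

section
/- Under the hypotheses of the weighted greedy bicriteria theorem, if all costs are equal to 1 (unit costs), the greedy algorithm returns a set S with f(S) ≥ η − ε and |S| ≤ k · ⌈ln(η/ε)⌉, where k = |S*| is the size of an arbitrary set with f(S*) ≥ η. -/
/-- Unit-cost greedy bicriteria: the greedy algorithm returns `S` with `f S ≥ η - ε` and
`|S| ≤ k · ⌈ln (η/ε)⌉` where `k = |S*|` is the size of any set with `f S* ≥ η`. -/
theorem greedy_mintss_unit_cost {X : Type*} [DecidableEq X] [Fintype X]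
    (f : Finset X → ℝ) (η ε : ℝ)
    (hf0 : f ∅ = 0) (hnn : ∀ S : Finset X, 0 ≤ f S)
    (hmono : ∀ S T : Finset X, S ⊆ T → f S ≤ f T)
    (hsub : ∀ (S T : Finset X) (w : X), S ⊆ T →
      f (insert w T) - f T ≤ f (insert w S) - f S)
    (hε : 0 < ε) (hεη : ε < η)
    (Sstar : Finset X) (hstar : η ≤ f Sstar)
    (seq : ℕ → Finset X) (pick : ℕ → X)
    (hseq0 : seq 0 = ∅)
    (hstep : ∀ i : ℕ, min (f (seq i)) η < η - ε →
      pick i ∉ seq i ∧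
      seq (i + 1) = insert (pick i) (seq i) ∧
      (∀ w : X, w ∉ seq i →
        min (f (insert w (seq i))) η - min (f (seq i)) η ≤
        min (f (insert (pick i) (seq i))) η - min (f (seq i)) η)) :
    ∃ l : ℕ, η - ε ≤ f (seq l) ∧
      ((seq l).card : ℝ) ≤ (Sstar.card : ℝ) * (⌈Real.log (η / ε)⌉₊ : ℝ) := by
  classical
  have hη : 0 < η := hε.trans hεη
  set k := Sstar.card with hkdef
  have hk : 0 < k := by
    rcases Nat.eq_zero_or_pos k with h | h
    · exfalso
      have hSe : Sstar = ∅ := Finset.card_eq_zero.mp h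
      rw [hSe, hf0] at hstar; linarith
    · exact h
  have hk1 : (1 : ℝ) ≤ (k : ℝ) := by exact_mod_cast hk
  have hkpos : (0 : ℝ) < (k : ℝ) := by positivity
  -- telescoping submodularity
  have tele : ∀ (T S : Finset X), f (S ∪ T) ≤ f S + ∑ w ∈ T, (f (insert w S) - f S) := by
    intro T
    induction T using Finset.induction_on with
    | empty => intro S; simp
    | insert _ _ ha ih =>
      rename_i a T
      intro S
      have h1 : S ∪ insert a T = insert a (S ∪ T) := Finset.union_insert a S T
      have h2 : f (insert a (S ∪ T)) - f (S ∪ T) ≤ f (insert a S) - f S :=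
        hsub S (S ∪ T) a Finset.subset_union_left
      have h3 := ih S
      rw [h1, Finset.sum_insert ha]
      linarith
  set N := ⌈Real.log (η / ε)⌉₊ with hNdef
  set L := k * N with hLdef
  -- key contraction step
  have key : ∀ i, min (f (seq i)) η < η - ε →
      η - min (f (seq (i + 1))) η ≤ (η - min (f (seq i)) η) * (1 - 1 / (k : ℝ)) := by
    intro i hi
    obtain ⟨hpick, hsucc, hbest⟩ := hstep i hi
    set S := seq i with hSdef
    have hfSle : f S ≤ η := by
      by_contra h
      push_neg at h
      rw [min_eq_right h.le] at hi; linarith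
    have hminS : min (f S) η = f S := min_eq_left hfSle
    have hfS : f S < η - ε := by rwa [hminS] at hi
    have hηfS : 0 < η - f S := by linarith
    have hsum : η - f S ≤ ∑ w ∈ Sstar, (f (insert w S) - f S) := by
      have h1 := tele Sstar S
      have h2 : η ≤ f (S ∪ Sstar) :=
        le_trans hstar (hmono _ _ Finset.subset_union_right)
      linarith
    have hex : ∃ w ∈ Sstar, (η - f S) / (k : ℝ) ≤ f (insert w S) - f S := by
      apply Finset.exists_le_of_sum_le (Finset.card_pos.mp hk)
      have : ∑ _w ∈ Sstar, (η - f S) / (k : ℝ) = (k : ℝ) * ((η - f S) / (k : ℝ)) := by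
        rw [Finset.sum_const, nsmul_eq_mul]
      rw [this, mul_div_cancel₀ _ (ne_of_gt hkpos)]
      exact hsum
    obtain ⟨w, hwS, hw⟩ := hex
    have hwnot : w ∉ S := by
      intro hmem
      rw [Finset.insert_eq_self.mpr hmem] at hw
      have : (0 : ℝ) < (η - f S) / (k : ℝ) := by positivity
      linarith
    have hdivle : (η - f S) / (k : ℝ) ≤ η - f S := by
      rw [div_le_iff₀ hkpos]
      nlinarith
    have hwgain : f S + (η - f S) / (k : ℝ) ≤ min (f (insert w S)) η := by
      apply le_min
      · linarith
      · linarith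
    have hbw := hbest w hwnot
    rw [hminS] at hbw
    have hpickgain : f S + (η - f S) / (k : ℝ) ≤ min (f (insert (pick i) S)) η := by
      linarith
    have heq : (η - f S) * (1 - 1 / (k : ℝ)) = (η - f S) - (η - f S) / (k : ℝ) := by
      field_simp
    rw [hsucc, hminS]
    linarith
  have h1k0 : (0 : ℝ) ≤ 1 - 1 / (k : ℝ) := by
    have : 1 / (k : ℝ) ≤ 1 := by
      rw [div_le_one hkpos]; exact hk1
    linarith
  by_cases hL : ∃ l, η - ε ≤ min (f (seq l)) η ∧ l ≤ L
  · obtain ⟨l0, hl0, hl0L⟩ := hL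
    have hEx : ∃ l, η - ε ≤ min (f (seq l)) η := ⟨l0, hl0⟩
    set l := Nat.find hEx with hldef
    have hlspec : η - ε ≤ min (f (seq l)) η := Nat.find_spec hEx
    have hlL : l ≤ L := le_trans (Nat.find_min' hEx hl0) hl0L
    have hcard : ∀ j, j ≤ l → (seq j).card ≤ j := by
      intro j
      induction j with
      | zero => intro _; simp [hseq0]
      | succ j ih =>
        intro hle
        have hjl : j < l := lt_of_lt_of_le (Nat.lt_succ_self j) hle
        have hja : min (f (seq j)) η < η - ε := by
          by_contra h
          push_neg at h
          exact absurd h (Nat.find_min hEx hjl)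
        obtain ⟨_, hsucc, _⟩ := hstep j hja
        rw [hsucc]
        calc (insert (pick j) (seq j)).card ≤ (seq j).card + 1 := Finset.card_insert_le _ _
          _ ≤ j + 1 := by
              have := ih (le_of_lt hjl)
              omega
    refine ⟨l, ?_, ?_⟩
    · exact le_trans hlspec (min_le_left _ _)
    · have h1 : ((seq l).card : ℝ) ≤ (l : ℝ) := by exact_mod_cast hcard l le_rfl
      have h2 : (l : ℝ) ≤ (L : ℝ) := by exact_mod_cast hlL
      have h3 : (L : ℝ) = (k : ℝ) * (N : ℝ) := by push_cast [hLdef]; ring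
      linarith
  · push_neg at hL
    exfalso
    have hdec : ∀ i, i ≤ L → η - min (f (seq i)) η ≤ η * (1 - 1 / (k : ℝ)) ^ i := by
      intro i
      induction i with
      | zero =>
        intro _
        rw [hseq0, hf0]
        rw [min_eq_left hη.le]
        simp
      | succ i ih =>
        intro hle
        have hi : i ≤ L := le_of_lt (lt_of_lt_of_le (Nat.lt_succ_self i) hle)
        have hact : min (f (seq i)) η < η - ε := by
          by_contra h
          push_neg at h
          exact absurd (hL i h) (not_lt.mpr hi)
        have h1 := key i hact
        have h2 := ih hi
        calc η - min (f (seq (i + 1))) η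
            ≤ (η - min (f (seq i)) η) * (1 - 1 / (k : ℝ)) := h1
          _ ≤ (η * (1 - 1 / (k : ℝ)) ^ i) * (1 - 1 / (k : ℝ)) :=
              mul_le_mul_of_nonneg_right h2 h1k0
          _ = η * (1 - 1 / (k : ℝ)) ^ (i + 1) := by ring
    have hlast : min (f (seq L)) η < η - ε := by
      by_contra h
      push_neg at h
      exact absurd (hL L h) (lt_irrefl L)
    have hfin := hdec L le_rfl
    -- bound η * (1 - 1/k)^L ≤ ε
    have hexp1 : (1 - 1 / (k : ℝ)) ≤ Real.exp (-(1 / (k : ℝ))) := by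
      have := Real.add_one_le_exp (-(1 / (k : ℝ)))
      linarith
    have hpow : (1 - 1 / (k : ℝ)) ^ L ≤ Real.exp (-(1 / (k : ℝ))) ^ L :=
      pow_le_pow_left₀ h1k0 hexp1 L
    have hexp2 : Real.exp (-(1 / (k : ℝ))) ^ L = Real.exp (-(N : ℝ)) := by
      rw [← Real.exp_nat_mul]
      congr 1
      rw [hLdef]
      push_cast
      field_simp
    have hlog : Real.log (η / ε) ≤ (N : ℝ) := Nat.le_ceil _
    have hexp3 : Real.exp (-(N : ℝ)) ≤ ε / η := by
      have hpos : (0 : ℝ) < ε / η := by positivity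
      rw [← Real.exp_log hpos]
      apply Real.exp_le_exp.mpr
      have : Real.log (ε / η) = -Real.log (η / ε) := by
        rw [← Real.log_inv]
        congr 1
        field_simp
      rw [this]
      linarith
    have hfinal : η * (1 - 1 / (k : ℝ)) ^ L ≤ ε := by
      calc η * (1 - 1 / (k : ℝ)) ^ L ≤ η * Real.exp (-(N : ℝ)) := by
            apply mul_le_mul_of_nonneg_left _ hη.le
            rw [← hexp2]; exact hpow
        _ ≤ η * (ε / η) := mul_le_mul_of_nonneg_left hexp3 hη.le
        _ = ε := by field_simp
    linarith
end

section
/- For any δ ∈ [0,1), k ≥ 1, define δ' = δ / (1 − (1−δ)(1−1/k)). Then 0 ≤ δ' < 1, and for any η > ε > 0 with δ'·η < ε, any sequence η_i ≤ η·e^{−i/k}(1−δ') + δ'·η reaches η_l ≤ ε within l ≤ k·(1 + ln(η(1−δ')/(ε(1 − δ'η/ε)))) steps. -/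
/-- With `δ' = δ / (1 - (1-δ)(1-1/k))` one has `0 ≤ δ' < 1`, and for `η > ε > 0` with
`δ'η < ε`, any sequence with `η_i ≤ η e^{-i/k}(1-δ') + δ'η` reaches `η_l ≤ ε` within
`l ≤ k·(1 + ln(η(1-δ')/(ε(1 - δ'η/ε))))` steps. -/
theorem approx_iteration_bound (δ k δ' : ℝ)
    (hδ0 : 0 ≤ δ) (hδ1 : δ < 1) (hk : 1 ≤ k)
    (hδ' : δ' = δ / (1 - (1 - δ) * (1 - 1 / k))) :
    0 ≤ δ' ∧ δ' < 1 ∧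
    ∀ η ε : ℝ, 0 < ε → ε < η → δ' * η < ε →
      ∀ a : ℕ → ℝ,
        (∀ i : ℕ, a i ≤ η * Real.exp (-(i : ℝ) / k) * (1 - δ') + δ' * η) →
        ∃ l : ℕ, a l ≤ ε ∧
          (l : ℝ) ≤ k * (1 + Real.log (η * (1 - δ') / (ε * (1 - δ' * η / ε)))) := by
  have hkpos : (0:ℝ) < k := lt_of_lt_of_le one_pos hk
  have hDeq : 1 - (1 - δ) * (1 - 1 / k) = δ + (1 - δ) / k := by
    field_simp; ring
  have hDpos : 0 < δ + (1 - δ) / k :=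
    add_pos_of_nonneg_of_pos hδ0 (div_pos (by linarith) hkpos)
  have hδ'eq : δ' = δ / (δ + (1 - δ) / k) := by rw [hδ', hDeq]
  have hδ'0 : 0 ≤ δ' := by rw [hδ'eq]; exact div_nonneg hδ0 hDpos.le
  have hδ'1 : δ' < 1 := by
    rw [hδ'eq, div_lt_one hDpos]
    have : 0 < (1 - δ) / k := div_pos (by linarith) hkpos
    linarith
  refine ⟨hδ'0, hδ'1, ?_⟩
  intro η ε hε hεη hδη a ha
  have hηpos : 0 < η := lt_trans hε hεη
  have hεδ : 0 < ε - δ' * η := by linarith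
  have hη1δ : 0 < η * (1 - δ') := mul_pos hηpos (by linarith)
  set C : ℝ := η * (1 - δ') / (ε - δ' * η) with hC
  have hCpos : 0 < C := div_pos hη1δ hεδ
  have hC1 : 1 < C := by
    rw [hC, lt_div_iff₀ hεδ]; nlinarith
  have hlogC : 0 < Real.log C := Real.log_pos hC1
  refine ⟨⌈k * Real.log C⌉₊, ?_, ?_⟩
  · have hl1 : k * Real.log C ≤ (⌈k * Real.log C⌉₊ : ℝ) := Nat.le_ceil _
    have hexp : Real.exp (-(⌈k * Real.log C⌉₊ : ℝ) / k) ≤ C⁻¹ := by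
      have h3 : -(⌈k * Real.log C⌉₊ : ℝ) / k ≤ -Real.log C := by
        rw [div_le_iff₀ hkpos]; nlinarith
      calc Real.exp (-(⌈k * Real.log C⌉₊ : ℝ) / k) ≤ Real.exp (-Real.log C) :=
            Real.exp_le_exp.mpr h3
        _ = C⁻¹ := by rw [Real.exp_neg, Real.exp_log hCpos]
    have hkey : η * Real.exp (-(⌈k * Real.log C⌉₊ : ℝ) / k) * (1 - δ') ≤ ε - δ' * η := by
      have h1 : η * Real.exp (-(⌈k * Real.log C⌉₊ : ℝ) / k) * (1 - δ') ≤ η * C⁻¹ * (1 - δ') := by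
        have := mul_le_mul_of_nonneg_left hexp hηpos.le
        nlinarith [Real.exp_pos (-(⌈k * Real.log C⌉₊ : ℝ) / k)]
      have h2 : η * C⁻¹ * (1 - δ') = ε - δ' * η := by
        rw [hC]
        field_simp [(sub_pos.mpr hδ'1).ne', hηpos.ne', hεδ.ne']
      linarith
    have := ha ⌈k * Real.log C⌉₊
    linarith
  · have hl2 : (⌈k * Real.log C⌉₊ : ℝ) ≤ k * Real.log C + 1 :=
      (Nat.ceil_lt_add_one (mul_pos hkpos hlogC).le).le
    have heq : ε * (1 - δ' * η / ε) = ε - δ' * η := by field_simp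
    rw [heq, ← hC]
    nlinarith
end

section
/- In the bipartite reduction graph: let U be a finite universe, 𝒮 a family of subsets of U, and G the directed bipartite graph with class-A nodes {v_S : S ∈ 𝒮}, class-B nodes {v_u : u ∈ U}, and an edge from v_S to v_u iff u ∈ S. Then for any x and y: there exist x sets in 𝒮 whose union has size at least y if and only if there exists a set of x nodes in G that 1-covers at least y + x nodes (where a set of nodes 1-covers all nodes at directed distance ≤ 1 from it, including themselves). -/
open Classical in
/-- The set of nodes 1-covered by `T` in the bipartite reduction graph: class-A nodes are
subsets `S ∈ 𝒮` (left summand), class-B nodes are elements of `U` (right summand), with an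
edge from `Sum.inl s` to `Sum.inr u` iff `s ∈ 𝒮` and `u ∈ s`. Each node covers itself. -/
noncomputable def oneCovered {U : Type*} [Fintype U] [DecidableEq U]
    (𝒮 : Finset (Finset U)) (T : Finset (Finset U ⊕ U)) : Finset (Finset U ⊕ U) :=
  Finset.univ.filter (fun w => w ∈ T ∨
    ∃ s ∈ 𝒮, ∃ u : U, Sum.inl s ∈ T ∧ u ∈ s ∧ w = Sum.inr u)

/-- Bipartite reduction: there exist `x` sets in `𝒮` whose union has size at least `y`
iff there is a set of `x` nodes in the reduction graph that 1-covers at least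
`y + x` nodes. -/
theorem bipartite_reduction {U : Type*} [Fintype U] [DecidableEq U]
    (𝒮 : Finset (Finset U)) (x y : ℕ) (hx : x ≤ 𝒮.card) :
    (∃ C : Finset (Finset U), C ⊆ 𝒮 ∧ C.card = x ∧ y ≤ (C.sup id).card) ↔
    (∃ T : Finset (Finset U ⊕ U), T.card = x ∧ y + x ≤ (oneCovered 𝒮 T).card) := by
  classical
  constructor
  · rintro ⟨C, hCS, hCcard, hCy⟩
    refine ⟨C.image Sum.inl, ?_, ?_⟩
    · rw [Finset.card_image_of_injective _ Sum.inl_injective, hCcard]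
    · have hsub : (C.image Sum.inl) ∪ ((C.sup id).image Sum.inr) ⊆ oneCovered 𝒮 (C.image Sum.inl) := by
        intro w hw
        simp only [oneCovered, Finset.mem_filter, Finset.mem_univ, true_and]
        rcases Finset.mem_union.1 hw with h | h
        · exact Or.inl h
        · obtain ⟨u, hu, rfl⟩ := Finset.mem_image.1 h
          obtain ⟨s, hsC, hus⟩ := Finset.mem_sup.1 hu
          exact Or.inr ⟨s, hCS hsC, u, Finset.mem_image_of_mem _ hsC, hus, rfl⟩
      have hdisj : Disjoint (C.image Sum.inl) ((C.sup id).image Sum.inr) := by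
        simp [Finset.disjoint_left]
      calc y + x ≤ (C.sup id).card + C.card := by
            exact Nat.add_le_add hCy (le_of_eq hCcard.symm)
        _ = ((C.image Sum.inl) ∪ ((C.sup id).image Sum.inr)).card := by
            rw [Finset.card_union_of_disjoint hdisj,
              Finset.card_image_of_injective _ Sum.inl_injective,
              Finset.card_image_of_injective _ Sum.inr_injective, Nat.add_comm]
        _ ≤ (oneCovered 𝒮 (C.image Sum.inl)).card := Finset.card_le_card hsub
  · rintro ⟨T, hTcard, hTy⟩
    set A : Finset (Finset U) := 𝒮.filter (fun s => Sum.inl s ∈ T) with hA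
    have hsub : oneCovered 𝒮 T ⊆ T ∪ ((A.sup id).image Sum.inr) := by
      intro w hw
      simp only [oneCovered, Finset.mem_filter, Finset.mem_univ, true_and] at hw
      rcases hw with h | ⟨s, hs𝒮, u, hsT, hus, rfl⟩
      · exact Finset.mem_union_left _ h
      · refine Finset.mem_union_right _ (Finset.mem_image_of_mem _ ?_)
        exact Finset.mem_sup.2 ⟨s, Finset.mem_filter.2 ⟨hs𝒮, hsT⟩, hus⟩
    have hcount : y ≤ (A.sup id).card := by
      have := Finset.card_le_card hsub
      have h2 : (T ∪ ((A.sup id).image Sum.inr)).card ≤ x + (A.sup id).card := by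
        calc (T ∪ ((A.sup id).image Sum.inr)).card
            ≤ T.card + ((A.sup id).image Sum.inr).card := Finset.card_union_le _ _
          _ ≤ x + (A.sup id).card := by
              rw [hTcard, Finset.card_image_of_injective _ Sum.inr_injective]
      omega
    have hAcard : A.card ≤ x := by
      have : A.image Sum.inl ⊆ T := by
        intro w hw
        obtain ⟨s, hs, rfl⟩ := Finset.mem_image.1 hw
        exact (Finset.mem_filter.1 hs).2
      have := Finset.card_le_card this
      rwa [Finset.card_image_of_injective _ Sum.inl_injective, hTcard] at this
    obtain ⟨C, hAC, hCS, hCcard⟩ :=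
      Finset.exists_subsuperset_card_eq (Finset.filter_subset _ 𝒮) hAcard hx
    refine ⟨C, hCS, hCcard, le_trans hcount (Finset.card_le_card ?_)⟩
    intro u hu
    obtain ⟨s, hs, hus⟩ := Finset.mem_sup.1 hu
    exact Finset.mem_sup.2 ⟨s, hAC hs, hus⟩
end
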